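/- Assume 0<λ<μ₁, 0<λ<μ₂, μ₁≠μ₂, λ+μ₁+μ₂=1. Let Y be the constrained walk on ℤ×ℤ₊ as above and τ = inf{k : Y_k(1)=Y_k(2)}. Then for all y ∈ ℤ×ℤ₊ with y(1) ≥ y(2): P_y(τ < ∞) = ρ₂^(y(1)-y(2)) + ((μ₂-λ)/(μ₂-μ₁))·ρ₁^(y(1)-y(2))·ρ₁^(y(2)) + ((μ₂-λ)/(μ₁-μ₂))·ρ₂^(y(1)-y(2))·ρ₁^(y(2)), where ρᵢ = λ/μᵢ. -/

import Mathlib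

open MeasureTheory

/-- Increment distribution of the limit walk Y: p(-1,0)=λ, p(1,1)=μ₁, p(0,-1)=μ₂. -/
noncomputable def incProb (lam mu1 mu2 : ℝ) (v : ℤ × ℤ) : ℝ :=
  if v = (-1, 0) then lam else if v = (1, 1) then mu1 else if v = (0, -1) then mu2 else 0

namespace HPF

/-- the three possible increments -/
def S : Finset (ℤ × ℤ) := {(-1, 0), (1, 1), (0, -1)}

lemma sumS (f : ℤ × ℤ → ℝ) : ∑ v ∈ S, f v = f (-1, 0) + f (1, 1) + f (0, -1) := by
  show ∑ v ∈ ({(-1,0),(1,1),(0,-1)} : Finset (ℤ×ℤ)), f v = _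
  rw [Finset.sum_insert (by decide), Finset.sum_insert (by decide), Finset.sum_singleton]
  ring

lemma p_a (lam mu1 mu2 : ℝ) : incProb lam mu1 mu2 (-1, 0) = lam := by simp [incProb]
lemma p_b (lam mu1 mu2 : ℝ) : incProb lam mu1 mu2 (1, 1) = mu1 := by
  simp only [incProb, if_neg (by decide : ((1:ℤ),(1:ℤ)) ≠ (-1,0)), if_pos rfl]; simp
lemma p_c (lam mu1 mu2 : ℝ) : incProb lam mu1 mu2 (0, -1) = mu2 := by
  simp only [incProb, if_neg (by decide : ((0:ℤ),(-1:ℤ)) ≠ (-1,0)),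
    if_neg (by decide : ((0:ℤ),(-1:ℤ)) ≠ (1,1)), if_pos rfl]; simp

lemma p_nonneg {lam mu1 mu2 : ℝ} (hl : 0 ≤ lam) (h1 : 0 ≤ mu1) (h2 : 0 ≤ mu2) (v : ℤ × ℤ) :
    0 ≤ incProb lam mu1 mu2 v := by
  unfold incProb; split_ifs <;> simp [hl, h1, h2]

lemma sum_p_S {lam mu1 mu2 : ℝ} (hsum : lam + mu1 + mu2 = 1) :
    ∑ v ∈ S, incProb lam mu1 mu2 v = 1 := by
  rw [sumS, p_a, p_b, p_c, hsum]

/-- one (constrained) step -/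
def step (z v : ℤ × ℤ) : ℤ × ℤ := z + (if 0 ≤ (z + v).2 then v else 0)

/-- unstopped path from z driven by w -/
def path (z : ℤ × ℤ) (w : ℕ → ℤ × ℤ) : ℕ → ℤ × ℤ
  | 0 => z
  | k + 1 => step (path z w k) (w k)

/-- stopping predicate: on the diagonal or at level n -/
def stopP (n : ℕ) (z : ℤ × ℤ) : Prop := z.1 = z.2 ∨ z.1 - z.2 = (n : ℤ)

instance (n : ℕ) (z : ℤ × ℤ) : Decidable (stopP n z) := by unfold stopP; infer_instance

def shift (w : ℕ → ℤ × ℤ) : ℕ → ℤ × ℤ := fun j => w (j + 1)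

def wcons (v : ℤ × ℤ) (w : ℕ → ℤ × ℤ) : ℕ → ℤ × ℤ :=
  fun j => if j = 0 then v else w (j - 1)

@[simp] lemma wcons_zero (v : ℤ × ℤ) (w : ℕ → ℤ × ℤ) : wcons v w 0 = v := rfl
@[simp] lemma wcons_succ (v : ℤ × ℤ) (w : ℕ → ℤ × ℤ) (j : ℕ) : wcons v w (j + 1) = w j := rfl
@[simp] lemma shift_wcons (v : ℤ × ℤ) (w : ℕ → ℤ × ℤ) : shift (wcons v w) = w := rfl

/-- stopped path (frozen at first time stopP holds), front recursion -/
def spath (n : ℕ) : ℤ × ℤ → (ℕ → ℤ × ℤ) → ℕ → ℤ × ℤ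
  | z, _, 0 => z
  | z, w, k + 1 => if stopP n z then z else spath n (step z (w 0)) (shift w) k

lemma path_front (z : ℤ × ℤ) (w : ℕ → ℤ × ℤ) (k : ℕ) :
    path z w (k + 1) = path (step z (w 0)) (shift w) k := by
  induction k with
  | zero => rfl
  | succ k ih => show step (path z w (k+1)) (w (k+1)) = _; rw [ih]; rfl

lemma spath_frozen {n : ℕ} {z : ℤ × ℤ} (h : stopP n z) (w : ℕ → ℤ × ℤ) (k : ℕ) :
    spath n z w k = z := by
  cases k with
  | zero => rfl
  | succ k => exact if_pos h

lemma spath_eq_path {n : ℕ} (k : ℕ) :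
    ∀ (z : ℤ × ℤ) (w : ℕ → ℤ × ℤ), (∀ j < k, ¬ stopP n (path z w j)) →
    spath n z w k = path z w k := by
  induction k with
  | zero => intro z w _; rfl
  | succ k ih =>
    intro z w h
    have h0 : ¬ stopP n z := h 0 (Nat.succ_pos k)
    rw [path_front]
    show (if stopP n z then z else spath n (step z (w 0)) (shift w) k) = _
    rw [if_neg h0]
    exact ih _ _ (fun j hj => by
      have := h (j + 1) (Nat.succ_lt_succ hj)
      rwa [path_front] at this)

/-- once the stopped path is stopped it never moves again -/
lemma spath_stay {n : ℕ} (k : ℕ) :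
    ∀ (z : ℤ × ℤ) (w : ℕ → ℤ × ℤ), stopP n (spath n z w k) →
    spath n z w (k + 1) = spath n z w k := by
  induction k with
  | zero => intro z w h; exact if_pos h
  | succ k ih =>
    intro z w h
    by_cases h0 : stopP n z
    · rw [spath_frozen h0, spath_frozen h0]
    · show (if stopP n z then z else spath n (step z (w 0)) (shift w) (k+1)) = _
      rw [if_neg h0]
      rw [show spath n z w (k+1) = spath n (step z (w 0)) (shift w) k from if_neg h0] at h ⊢
      exact ih _ _ h

/-- characterization of being stopped-at-diagonal -/
lemma spath_diag_iff {n : ℕ} (k : ℕ) :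
    ∀ (z : ℤ × ℤ) (w : ℕ → ℤ × ℤ),
    ((spath n z w k).1 = (spath n z w k).2 ↔
      ∃ j ≤ k, (path z w j).1 = (path z w j).2 ∧ ∀ i < j, ¬ stopP n (path z w i)) := by
  induction k with
  | zero =>
    intro z w
    constructor
    · intro h; exact ⟨0, le_refl 0, h, fun i hi => absurd hi (Nat.not_lt_zero i)⟩
    · rintro ⟨j, hj, h, _⟩; rw [Nat.le_zero.mp hj] at h; exact h
  | succ k ih =>
    intro z w
    by_cases h0 : stopP n z
    · rw [spath_frozen h0]
      by_cases hd : z.1 = z.2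
      · exact ⟨fun _ => ⟨0, Nat.zero_le _, hd, fun i hi => absurd hi (Nat.not_lt_zero i)⟩,
          fun _ => hd⟩
      · constructor
        · intro h; exact absurd h hd
        · rintro ⟨j, hj, h, hpre⟩
          rcases Nat.eq_zero_or_pos j with rfl | hjpos
          · exact absurd h hd
          · exact absurd h0 (hpre 0 hjpos)
    · rw [show spath n z w (k+1) = spath n (step z (w 0)) (shift w) k from if_neg h0, ih]
      constructor
      · rintro ⟨j, hj, h, hpre⟩
        refine ⟨j + 1, Nat.succ_le_succ hj, ?_, ?_⟩
        · rwa [path_front]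
        · intro i hi
          cases i with
          | zero => exact h0
          | succ i => rw [path_front]; exact hpre i (Nat.lt_of_succ_lt_succ hi)
      · rintro ⟨j, hj, h, hpre⟩
        cases j with
        | zero => exact absurd (Or.inl h) h0
        | succ j =>
          refine ⟨j, Nat.le_of_succ_le_succ hj, ?_, ?_⟩
          · rwa [path_front] at h
          · intro i hi
            have := hpre (i + 1) (Nat.succ_lt_succ hi)
            rwa [path_front] at this

/-- spath depends only on the first k values of w -/
lemma spath_congr {n : ℕ} (k : ℕ) :
    ∀ (z : ℤ × ℤ) (w w' : ℕ → ℤ × ℤ), (∀ j < k, w j = w' j) →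
    spath n z w k = spath n z w' k := by
  induction k with
  | zero => intro z w w' _; rfl
  | succ k ih =>
    intro z w w' h
    show (if stopP n z then z else _) = (if stopP n z then z else _)
    by_cases h0 : stopP n z
    · rw [if_pos h0, if_pos h0]
    · rw [if_neg h0, if_neg h0, h 0 (Nat.succ_pos k)]
      exact ih _ _ _ (fun j hj => h (j + 1) (Nat.succ_lt_succ hj))



/-- harmonic function in skew coordinates, c = (mu2-lam)/(mu2-mu1) -/
noncomputable def gfun (lam mu1 mu2 c : ℝ) (a b : ℤ) : ℝ :=
  (lam / mu2) ^ a + c * (lam / mu1) ^ a * (lam / mu1) ^ b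
    - c * (lam / mu2) ^ a * (lam / mu1) ^ b

variable {lam mu1 mu2 c : ℝ}

lemma gfun_harmonic_int (hl0 : lam ≠ 0) (hm1 : mu1 ≠ 0) (hm2 : mu2 ≠ 0)
    (hsum : lam + mu1 + mu2 = 1) (a b : ℤ) :
    lam * gfun lam mu1 mu2 c (a - 1) b + mu1 * gfun lam mu1 mu2 c a (b + 1)
      + mu2 * gfun lam mu1 mu2 c (a + 1) (b - 1) = gfun lam mu1 mu2 c a b := by
  have hr2 : lam / mu2 ≠ 0 := div_ne_zero hl0 hm2
  have hr1 : lam / mu1 ≠ 0 := div_ne_zero hl0 hm1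
  unfold gfun
  simp only [zpow_sub_one₀ hr2, zpow_sub_one₀ hr1, zpow_add_one₀ hr2, zpow_add_one₀ hr1]
  generalize (lam / mu2) ^ a = X
  generalize (lam / mu1) ^ a = Y
  generalize (lam / mu1) ^ b = Z
  field_simp
  linear_combination (X + c*Y*Z - c*X*Z) * hsum

lemma gfun_harmonic_bdy (hl0 : lam ≠ 0) (hm1 : mu1 ≠ 0) (hm2 : mu2 ≠ 0)
    (hsum : lam + mu1 + mu2 = 1) (hc : c * (mu2 - mu1) = mu2 - lam) (a : ℤ) :
    lam * gfun lam mu1 mu2 c (a - 1) 0 + mu1 * gfun lam mu1 mu2 c a 1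
      + mu2 * gfun lam mu1 mu2 c a 0 = gfun lam mu1 mu2 c a 0 := by
  have hr2 : lam / mu2 ≠ 0 := div_ne_zero hl0 hm2
  have hr1 : lam / mu1 ≠ 0 := div_ne_zero hl0 hm1
  unfold gfun
  simp only [zpow_sub_one₀ hr2, zpow_sub_one₀ hr1, zpow_zero, zpow_one]
  generalize (lam / mu2) ^ a = X
  generalize (lam / mu1) ^ a = Y
  field_simp
  linear_combination (X - c*X + c*Y) * hsum - X * hc


lemma gfun_diag (b : ℤ) : gfun lam mu1 mu2 c 0 b = 1 := by
  simp [gfun]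

lemma gfun_bound (hlam : 0 < lam) (h1 : lam < mu1) (h2 : lam < mu2)
    {a b : ℤ} (ha : 0 ≤ a) (hb : 0 ≤ b) :
    |gfun lam mu1 mu2 c a b| ≤ 1 + 2 * |c| := by
  have hm1 : (0:ℝ) < mu1 := lt_trans hlam h1
  have hm2 : (0:ℝ) < mu2 := lt_trans hlam h2
  have hr1 : (0:ℝ) < lam / mu1 := div_pos hlam hm1
  have hr2 : (0:ℝ) < lam / mu2 := div_pos hlam hm2
  have hr1' : lam / mu1 ≤ 1 := le_of_lt ((div_lt_one hm1).mpr h1)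
  have hr2' : lam / mu2 ≤ 1 := le_of_lt ((div_lt_one hm2).mpr h2)
  have b1 : |(lam / mu2) ^ a| ≤ 1 := by
    rw [abs_of_pos (zpow_pos hr2 a)]; exact zpow_le_one₀ hr2 hr2' ha
  have b2 : |(lam / mu1) ^ a| ≤ 1 := by
    rw [abs_of_pos (zpow_pos hr1 a)]; exact zpow_le_one₀ hr1 hr1' ha
  have b3 : |(lam / mu1) ^ b| ≤ 1 := by
    rw [abs_of_pos (zpow_pos hr1 b)]; exact zpow_le_one₀ hr1 hr1' hb
  unfold gfun
  have h4 : |c * (lam / mu1) ^ a * (lam / mu1) ^ b| ≤ |c| := by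
    rw [abs_mul, abs_mul]
    calc |c| * |(lam / mu1) ^ a| * |(lam / mu1) ^ b|
        ≤ |c| * 1 * 1 := by
          apply mul_le_mul (mul_le_mul le_rfl b2 (abs_nonneg _) (abs_nonneg _)) b3
            (abs_nonneg _) (by positivity)
      _ = |c| := by ring
  have h5 : |c * (lam / mu2) ^ a * (lam / mu1) ^ b| ≤ |c| := by
    rw [abs_mul, abs_mul]
    calc |c| * |(lam / mu2) ^ a| * |(lam / mu1) ^ b|
        ≤ |c| * 1 * 1 := by
          apply mul_le_mul (mul_le_mul le_rfl b1 (abs_nonneg _) (abs_nonneg _)) b3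
            (abs_nonneg _) (by positivity)
      _ = |c| := by ring
  calc |(lam / mu2) ^ a + c * (lam / mu1) ^ a * (lam / mu1) ^ b
        - c * (lam / mu2) ^ a * (lam / mu1) ^ b|
      ≤ |(lam / mu2) ^ a + c * (lam / mu1) ^ a * (lam / mu1) ^ b|
        + |c * (lam / mu2) ^ a * (lam / mu1) ^ b| := by
        exact abs_sub _ _
    _ ≤ (|(lam / mu2) ^ a| + |c * (lam / mu1) ^ a * (lam / mu1) ^ b|)
        + |c * (lam / mu2) ^ a * (lam / mu1) ^ b| := by gcongr; exact abs_add_le _ _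
    _ ≤ (1 + |c|) + |c| := by gcongr
    _ = 1 + 2 * |c| := by ring

lemma gfun_level_bound (hlam : 0 < lam) (h1 : lam < mu1) (h2 : lam < mu2)
    {b : ℤ} (hb : 0 ≤ b) (n : ℕ) :
    |gfun lam mu1 mu2 c (n : ℤ) b|
      ≤ (1 + 2 * |c|) * (max (lam / mu1) (lam / mu2)) ^ n := by
  have hm1 : (0:ℝ) < mu1 := lt_trans hlam h1
  have hm2 : (0:ℝ) < mu2 := lt_trans hlam h2
  have hr1 : (0:ℝ) < lam / mu1 := div_pos hlam hm1
  have hr2 : (0:ℝ) < lam / mu2 := div_pos hlam hm2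
  have hr1' : lam / mu1 ≤ 1 := le_of_lt ((div_lt_one hm1).mpr h1)
  set r := max (lam / mu1) (lam / mu2) with hr
  have hrpos : (0:ℝ) < r := lt_max_of_lt_left hr1
  have b1 : |(lam / mu2) ^ (n : ℤ)| ≤ r ^ n := by
    rw [abs_of_pos (zpow_pos hr2 _), zpow_natCast]
    exact pow_le_pow_left₀ (le_of_lt hr2) (le_max_right _ _) n
  have b2 : |(lam / mu1) ^ (n : ℤ)| ≤ r ^ n := by
    rw [abs_of_pos (zpow_pos hr1 _), zpow_natCast]
    exact pow_le_pow_left₀ (le_of_lt hr1) (le_max_left _ _) n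
  have b3 : |(lam / mu1) ^ b| ≤ 1 := by
    rw [abs_of_pos (zpow_pos hr1 b)]; exact zpow_le_one₀ hr1 hr1' hb
  have hrn : (0:ℝ) ≤ r ^ n := le_of_lt (pow_pos hrpos n)
  have h4 : |c * (lam / mu1) ^ (n:ℤ) * (lam / mu1) ^ b| ≤ |c| * r ^ n := by
    rw [abs_mul, abs_mul]
    calc |c| * |(lam / mu1) ^ (n:ℤ)| * |(lam / mu1) ^ b|
        ≤ |c| * (r ^ n) * 1 := by
          apply mul_le_mul (mul_le_mul le_rfl b2 (abs_nonneg _) (abs_nonneg _)) b3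
            (abs_nonneg _) (by positivity)
      _ = |c| * r ^ n := by ring
  have h5 : |c * (lam / mu2) ^ (n:ℤ) * (lam / mu1) ^ b| ≤ |c| * r ^ n := by
    rw [abs_mul, abs_mul]
    calc |c| * |(lam / mu2) ^ (n:ℤ)| * |(lam / mu1) ^ b|
        ≤ |c| * (r ^ n) * 1 := by
          apply mul_le_mul (mul_le_mul le_rfl b1 (abs_nonneg _) (abs_nonneg _)) b3
            (abs_nonneg _) (by positivity)
      _ = |c| * r ^ n := by ring
  unfold gfun
  calc |(lam / mu2) ^ (n:ℤ) + c * (lam / mu1) ^ (n:ℤ) * (lam / mu1) ^ b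
        - c * (lam / mu2) ^ (n:ℤ) * (lam / mu1) ^ b|
      ≤ |(lam / mu2) ^ (n:ℤ) + c * (lam / mu1) ^ (n:ℤ) * (lam / mu1) ^ b|
        + |c * (lam / mu2) ^ (n:ℤ) * (lam / mu1) ^ b| := by
        exact abs_sub _ _
    _ ≤ (|(lam / mu2) ^ (n:ℤ)| + |c * (lam / mu1) ^ (n:ℤ) * (lam / mu1) ^ b|)
        + |c * (lam / mu2) ^ (n:ℤ) * (lam / mu1) ^ b| := by gcongr; exact abs_add_le _ _
    _ ≤ (r ^ n + |c| * r ^ n) + |c| * r ^ n := by gcongr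
    _ = (1 + 2 * |c|) * r ^ n := by ring

/-- one-step harmonicity in terms of `step` -/
lemma step_harmonic (hlam : 0 < lam) (h1 : lam < mu1) (h2 : lam < mu2)
    (hsum : lam + mu1 + mu2 = 1) (hc : c * (mu2 - mu1) = mu2 - lam)
    (z : ℤ × ℤ) (hz2 : 0 ≤ z.2) :
    ∑ v ∈ S, incProb lam mu1 mu2 v
        * gfun lam mu1 mu2 c ((step z v).1 - (step z v).2) (step z v).2
      = gfun lam mu1 mu2 c (z.1 - z.2) z.2 := by
  have hl0 : lam ≠ 0 := ne_of_gt hlam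
  have hm1 : mu1 ≠ 0 := ne_of_gt (lt_trans hlam h1)
  have hm2 : mu2 ≠ 0 := ne_of_gt (lt_trans hlam h2)
  rw [sumS, p_a, p_b, p_c]
  have hs1 : step z (-1, 0) = (z.1 - 1, z.2) := by
    unfold step
    rw [if_pos (by simpa using hz2)]
    ext <;> simp <;> ring
  have hs2 : step z (1, 1) = (z.1 + 1, z.2 + 1) := by
    unfold step
    rw [if_pos (by simp; omega)]
    ext <;> simp
  rw [hs1, hs2]
  by_cases hb : 1 ≤ z.2
  · have hs3 : step z (0, -1) = (z.1, z.2 - 1) := by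
      unfold step
      rw [if_pos (by simp; omega)]
      ext <;> simp <;> ring
    rw [hs3]
    simp only
    have e1 : z.1 - 1 - z.2 = z.1 - z.2 - 1 := by ring
    have e2 : z.1 + 1 - (z.2 + 1) = z.1 - z.2 := by ring
    have e3 : z.1 - (z.2 - 1) = z.1 - z.2 + 1 := by ring
    rw [e1, e2, e3]
    exact gfun_harmonic_int hl0 hm1 hm2 hsum _ _
  · have hz0 : z.2 = 0 := by omega
    have hs3 : step z (0, -1) = z := by
      unfold step
      rw [if_neg (by simp; omega)]
      simp
    rw [hs3]
    simp only
    have e1 : z.1 - 1 - z.2 = z.1 - z.2 - 1 := by ring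
    have e2 : z.1 + 1 - (z.2 + 1) = z.1 - z.2 := by ring
    have e4 : z.2 + 1 = 1 := by omega
    rw [e1, e2, e4, hz0]
    exact gfun_harmonic_bdy hl0 hm1 hm2 hsum hc _




/-! ### Stage 4: recursive expectation functionals -/

lemma step_a {z : ℤ × ℤ} (hz2 : 0 ≤ z.2) : step z (-1, 0) = (z.1 - 1, z.2) := by
  unfold step
  rw [if_pos (by simpa using hz2)]
  ext <;> simp <;> ring

lemma step_b (z : ℤ × ℤ) (hz2 : 0 ≤ z.2) : step z (1, 1) = (z.1 + 1, z.2 + 1) := by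
  unfold step
  rw [if_pos (by simp; omega)]
  ext <;> simp

lemma step_c1 {z : ℤ × ℤ} (hz2 : 1 ≤ z.2) : step z (0, -1) = (z.1, z.2 - 1) := by
  unfold step
  rw [if_pos (by simp; omega)]
  ext <;> simp <;> ring

lemma step_c0 {z : ℤ × ℤ} (hz2 : z.2 ≤ 0) : step z (0, -1) = z := by
  unfold step
  rw [if_neg (by simp; omega)]
  simp

/-- good region: z.2 ≥ 0, 0 ≤ z.1 - z.2 ≤ n -/
def good (n : ℕ) (z : ℤ × ℤ) : Prop := 0 ≤ z.2 ∧ 0 ≤ z.1 - z.2 ∧ z.1 - z.2 ≤ (n : ℤ)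

lemma good_step {n : ℕ} {z : ℤ × ℤ} (hg : good n z) (hs : ¬ stopP n z) {v : ℤ × ℤ}
    (hv : v ∈ S) : good n (step z v) := by
  obtain ⟨hz2, ha0, han⟩ := hg
  have hnd : z.1 ≠ z.2 := fun h => hs (Or.inl h)
  have hnl : z.1 - z.2 ≠ (n : ℤ) := fun h => hs (Or.inr h)
  have hv' : v = (-1, 0) ∨ v = (1, 1) ∨ v = (0, -1) := by
    simpa [S] using hv
  rcases hv' with rfl | rfl | rfl
  · rw [step_a hz2]; exact ⟨hz2, by simp; omega, by simp; omega⟩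
  · rw [step_b z hz2]; exact ⟨by simp; omega, by simp; omega, by simp; omega⟩
  · by_cases h1 : 1 ≤ z.2
    · rw [step_c1 h1]; exact ⟨by simp; omega, by simp; omega, by simp; omega⟩
    · rw [step_c0 (by omega)]; exact ⟨hz2, ha0, han⟩

variable (lam mu1 mu2 : ℝ) in
/-- probability of being stopped at the diagonal by time k -/
noncomputable def PAf (n : ℕ) : ℕ → ℤ × ℤ → ℝ
  | 0, z => if z.1 = z.2 then 1 else 0
  | k + 1, z => if stopP n z then (if z.1 = z.2 then 1 else 0)
      else ∑ v ∈ S, incProb lam mu1 mu2 v * PAf n k (step z v)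

variable (lam mu1 mu2 : ℝ) in
/-- probability of not being stopped by time k -/
noncomputable def PCf (n : ℕ) : ℕ → ℤ × ℤ → ℝ
  | 0, z => if stopP n z then 0 else 1
  | k + 1, z => if stopP n z then 0
      else ∑ v ∈ S, incProb lam mu1 mu2 v * PCf n k (step z v)

variable {lam mu1 mu2 c : ℝ}

lemma PAf_stopped {n : ℕ} {z : ℤ × ℤ} (h : stopP n z) (k : ℕ) :
    PAf lam mu1 mu2 n k z = if z.1 = z.2 then 1 else 0 := by
  cases k with
  | zero => rfl
  | succ k => exact if_pos h

lemma PCf_stopped {n : ℕ} {z : ℤ × ℤ} (h : stopP n z) (k : ℕ) :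
    PCf lam mu1 mu2 n k z = 0 := by
  cases k with
  | zero => exact if_pos h
  | succ k => exact if_pos h

section Probs
variable (hlam : 0 < lam) (h1 : lam < mu1) (h2 : lam < mu2) (hsum : lam + mu1 + mu2 = 1)
include hlam h1 h2

lemma pS_nonneg (v : ℤ × ℤ) : 0 ≤ incProb lam mu1 mu2 v :=
  p_nonneg (le_of_lt hlam) (le_of_lt (lt_trans hlam h1)) (le_of_lt (lt_trans hlam h2)) v

lemma PCf_nonneg (n : ℕ) : ∀ (k : ℕ) (z : ℤ × ℤ), 0 ≤ PCf lam mu1 mu2 n k z := by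
  intro k
  induction k with
  | zero => intro z; show (0:ℝ) ≤ if stopP n z then 0 else 1; split <;> norm_num
  | succ k ih =>
    intro z
    show (0:ℝ) ≤ if stopP n z then 0 else _
    split
    · exact le_refl 0
    · exact Finset.sum_nonneg fun v _ =>
        mul_nonneg (pS_nonneg hlam h1 h2 v) (ih _)

include hsum

lemma PCf_le_one (n : ℕ) : ∀ (k : ℕ) (z : ℤ × ℤ), PCf lam mu1 mu2 n k z ≤ 1 := by
  intro k
  induction k with
  | zero => intro z; show (if stopP n z then (0:ℝ) else 1) ≤ 1; split <;> norm_num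
  | succ k ih =>
    intro z
    show (if stopP n z then (0:ℝ) else _) ≤ 1
    split
    · norm_num
    · calc ∑ v ∈ S, incProb lam mu1 mu2 v * PCf lam mu1 mu2 n k (step z v)
          ≤ ∑ v ∈ S, incProb lam mu1 mu2 v * 1 := by
            refine Finset.sum_le_sum fun v _ => ?_
            exact mul_le_mul_of_nonneg_left (ih _) (pS_nonneg hlam h1 h2 v)
        _ = 1 := by
            simp only [mul_one]; exact sum_p_S hsum

lemma PCf_succ_le (n : ℕ) : ∀ (k : ℕ) (z : ℤ × ℤ),
    PCf lam mu1 mu2 n (k + 1) z ≤ PCf lam mu1 mu2 n k z := by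
  intro k
  induction k with
  | zero =>
    intro z
    show (if stopP n z then (0:ℝ) else _) ≤ if stopP n z then 0 else 1
    by_cases h : stopP n z
    · rw [if_pos h, if_pos h]
    · rw [if_neg h, if_neg h]
      calc ∑ v ∈ S, incProb lam mu1 mu2 v * PCf lam mu1 mu2 n 0 (step z v)
          ≤ ∑ v ∈ S, incProb lam mu1 mu2 v * 1 := by
            refine Finset.sum_le_sum fun v _ => ?_
            exact mul_le_mul_of_nonneg_left (PCf_le_one hlam h1 h2 hsum n 0 _)
              (pS_nonneg hlam h1 h2 v)
        _ = 1 := by simp only [mul_one]; exact sum_p_S hsum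
  | succ k ih =>
    intro z
    show (if stopP n z then (0:ℝ) else _) ≤ if stopP n z then 0 else _
    by_cases h : stopP n z
    · rw [if_pos h, if_pos h]
    · rw [if_neg h, if_neg h]
      refine Finset.sum_le_sum fun v _ => ?_
      exact mul_le_mul_of_nonneg_left (ih _) (pS_nonneg hlam h1 h2 v)

lemma PCf_anti (n : ℕ) {k k' : ℕ} (h : k ≤ k') (z : ℤ × ℤ) :
    PCf lam mu1 mu2 n k' z ≤ PCf lam mu1 mu2 n k z := by
  induction k' with
  | zero => rw [Nat.le_zero.mp h]
  | succ k' ih =>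
    rcases Nat.lt_or_ge k (k' + 1) with hlt | hge
    · exact le_trans (PCf_succ_le hlam h1 h2 hsum n k' z) (ih (Nat.lt_succ_iff.mp hlt))
    · rw [Nat.le_antisymm h hge]

/-- the main martingale estimate -/
lemma main_estimate (hc : c * (mu2 - mu1) = mu2 - lam) (n : ℕ) :
    ∀ (k : ℕ) (z : ℤ × ℤ), good n z →
    |gfun lam mu1 mu2 c (z.1 - z.2) z.2 - PAf lam mu1 mu2 n k z|
      ≤ (1 + 2 * |c|) * (max (lam / mu1) (lam / mu2)) ^ n
        + (1 + 2 * |c|) * PCf lam mu1 mu2 n k z := by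
  have hm1 : (0:ℝ) < mu1 := lt_trans hlam h1
  have hBB : (0:ℝ) ≤ 1 + 2 * |c| := by positivity
  have hrn : (0:ℝ) ≤ (max (lam / mu1) (lam / mu2)) ^ n := by positivity
  -- helper for the two stopped situations
  have hstop : ∀ (k : ℕ) (z : ℤ × ℤ), good n z → stopP n z →
      |gfun lam mu1 mu2 c (z.1 - z.2) z.2 - PAf lam mu1 mu2 n k z|
        ≤ (1 + 2 * |c|) * (max (lam / mu1) (lam / mu2)) ^ n
          + (1 + 2 * |c|) * PCf lam mu1 mu2 n k z := by
    intro k z hg hs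
    rw [PAf_stopped hs, PCf_stopped hs]
    by_cases hd : z.1 = z.2
    · rw [if_pos hd]
      have : z.1 - z.2 = 0 := by omega
      rw [this, gfun_diag]
      simpa using by positivity
    · rw [if_neg hd]
      have hlev : z.1 - z.2 = (n : ℤ) := hs.resolve_left hd
      rw [hlev, sub_zero]
      have := gfun_level_bound (c := c) hlam h1 h2 hg.1 n
      calc |gfun lam mu1 mu2 c (n:ℤ) z.2|
          ≤ (1 + 2 * |c|) * (max (lam / mu1) (lam / mu2)) ^ n := this
        _ ≤ _ := by simpa using le_refl _
  intro k
  induction k with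
  | zero =>
    intro z hg
    by_cases hs : stopP n z
    · exact hstop 0 z hg hs
    · show |_ - if z.1 = z.2 then (1:ℝ) else 0| ≤ _
      rw [if_neg (fun h => hs (Or.inl h)), sub_zero]
      have hb := gfun_bound (c := c) hlam h1 h2 hg.2.1 hg.1
      have hc1 : PCf lam mu1 mu2 n 0 z = 1 := if_neg hs
      rw [hc1, mul_one]
      have := mul_nonneg hBB hrn
      linarith
  | succ k ih =>
    intro z hg
    by_cases hs : stopP n z
    · exact hstop (k + 1) z hg hs
    · have hgf := step_harmonic (c := c) hlam h1 h2 hsum hc z hg.1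
      have hPA : PAf lam mu1 mu2 n (k+1) z
          = ∑ v ∈ S, incProb lam mu1 mu2 v * PAf lam mu1 mu2 n k (step z v) := if_neg hs
      have hPC : PCf lam mu1 mu2 n (k+1) z
          = ∑ v ∈ S, incProb lam mu1 mu2 v * PCf lam mu1 mu2 n k (step z v) := if_neg hs
      rw [hPA, hPC, ← hgf, ← Finset.sum_sub_distrib]
      have heq : ∀ v ∈ S, incProb lam mu1 mu2 v
            * gfun lam mu1 mu2 c ((step z v).1 - (step z v).2) (step z v).2
          - incProb lam mu1 mu2 v * PAf lam mu1 mu2 n k (step z v)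
          = incProb lam mu1 mu2 v
            * (gfun lam mu1 mu2 c ((step z v).1 - (step z v).2) (step z v).2
                - PAf lam mu1 mu2 n k (step z v)) := fun v _ => by ring
      rw [Finset.sum_congr rfl heq]
      calc |∑ v ∈ S, incProb lam mu1 mu2 v
            * (gfun lam mu1 mu2 c ((step z v).1 - (step z v).2) (step z v).2
                - PAf lam mu1 mu2 n k (step z v))|
          ≤ ∑ v ∈ S, |incProb lam mu1 mu2 v
            * (gfun lam mu1 mu2 c ((step z v).1 - (step z v).2) (step z v).2
                - PAf lam mu1 mu2 n k (step z v))| := Finset.abs_sum_le_sum_abs _ _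
        _ ≤ ∑ v ∈ S, incProb lam mu1 mu2 v
              * ((1 + 2 * |c|) * (max (lam / mu1) (lam / mu2)) ^ n
                + (1 + 2 * |c|) * PCf lam mu1 mu2 n k (step z v)) := by
            refine Finset.sum_le_sum fun v hv => ?_
            rw [abs_mul, abs_of_nonneg (pS_nonneg hlam h1 h2 v)]
            exact mul_le_mul_of_nonneg_left (ih (step z v) (good_step hg hs hv))
              (pS_nonneg hlam h1 h2 v)
        _ = (1 + 2 * |c|) * (max (lam / mu1) (lam / mu2)) ^ n
              + (1 + 2 * |c|) * ∑ v ∈ S, incProb lam mu1 mu2 v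
                  * PCf lam mu1 mu2 n k (step z v) := by
            rw [Finset.sum_congr rfl (fun v _ => mul_add (incProb lam mu1 mu2 v) _ _),
              Finset.sum_add_distrib, ← Finset.sum_mul, sum_p_S hsum, one_mul,
              Finset.mul_sum]
            congr 1
            exact Finset.sum_congr rfl fun v _ => by ring

end Probs


section Probs2
variable (hlam : 0 < lam) (h1 : lam < mu1) (h2 : lam < mu2) (hsum : lam + mu1 + mu2 = 1)
include hlam h1 h2 hsum

lemma lam_lt_one : lam < 1 := by
  have : 0 < mu1 := lt_trans hlam h1
  have : 0 < mu2 := lt_trans hlam h2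
  linarith

lemma PCf_basic (n : ℕ) : ∀ (k : ℕ) (z : ℤ × ℤ), good n z → (z.1 - z.2).toNat ≤ k →
    PCf lam mu1 mu2 n k z ≤ 1 - lam ^ (z.1 - z.2).toNat := by
  have hl1 : lam < 1 := lam_lt_one hlam h1 h2 hsum
  intro k
  induction k with
  | zero =>
    intro z hg hk
    obtain ⟨hz2, ha0, han⟩ := hg
    have hd : z.1 = z.2 := by omega
    rw [PCf_stopped (Or.inl hd)]
    have : (z.1 - z.2).toNat = 0 := by omega
    rw [this, pow_zero]
    norm_num
  | succ k ih =>
    intro z hg hk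
    obtain ⟨hz2, ha0, han⟩ := id hg
    have hpow1 : lam ^ (z.1 - z.2).toNat ≤ 1 :=
      pow_le_one₀ (le_of_lt hlam) (le_of_lt hl1)
    by_cases hs : stopP n z
    · rw [PCf_stopped hs]; linarith
    · have hd : z.1 ≠ z.2 := fun h => hs (Or.inl h)
      have hd1 : 1 ≤ (z.1 - z.2).toNat := by omega
      have hPC : PCf lam mu1 mu2 n (k+1) z
          = ∑ v ∈ S, incProb lam mu1 mu2 v * PCf lam mu1 mu2 n k (step z v) := if_neg hs
      rw [hPC, sumS, p_a, p_b, p_c]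
      have hga : good n (step z (-1, 0)) := good_step hg hs (by simp [S])
      have hstep : step z (-1, 0) = (z.1 - 1, z.2) := step_a hg.1
      have hia : PCf lam mu1 mu2 n k (step z (-1, 0))
          ≤ 1 - lam ^ ((z.1 - z.2).toNat - 1) := by
        have htn : ((step z (-1, 0)).1 - (step z (-1, 0)).2).toNat
            = (z.1 - z.2).toNat - 1 := by rw [hstep]; simp; omega
        have := ih (step z (-1, 0)) hga (by omega)
        rwa [htn] at this
      have hib : PCf lam mu1 mu2 n k (step z (1, 1)) ≤ 1 :=
        PCf_le_one hlam h1 h2 hsum n k _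
      have hic : PCf lam mu1 mu2 n k (step z (0, -1)) ≤ 1 :=
        PCf_le_one hlam h1 h2 hsum n k _
      have hm1 : (0:ℝ) < mu1 := lt_trans hlam h1
      have hm2 : (0:ℝ) < mu2 := lt_trans hlam h2
      have hpows : lam * lam ^ ((z.1 - z.2).toNat - 1) = lam ^ (z.1 - z.2).toNat := by
        rw [← pow_succ']
        congr 1
        omega
      calc lam * PCf lam mu1 mu2 n k (step z (-1, 0))
            + mu1 * PCf lam mu1 mu2 n k (step z (1, 1))
            + mu2 * PCf lam mu1 mu2 n k (step z (0, -1))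
          ≤ lam * (1 - lam ^ ((z.1 - z.2).toNat - 1)) + mu1 * 1 + mu2 * 1 := by
            gcongr
        _ = 1 - lam ^ (z.1 - z.2).toNat := by
            rw [mul_one, mul_one, mul_sub, mul_one, hpows]; linarith


lemma PCf_chain {n : ℕ} {m : ℕ} {cc : ℝ} (hcc : 0 ≤ cc)
    (hb : ∀ z, good n z → PCf lam mu1 mu2 n m z ≤ cc) :
    ∀ (a : ℕ) (z : ℤ × ℤ), good n z →
      PCf lam mu1 mu2 n (a + m) z ≤ cc * PCf lam mu1 mu2 n a z := by
  intro a
  induction a with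
  | zero =>
    intro z hg
    by_cases hs : stopP n z
    · rw [PCf_stopped hs, PCf_stopped hs, mul_zero]
    · have h0 : PCf lam mu1 mu2 n 0 z = 1 := if_neg hs
      rw [Nat.zero_add, h0, mul_one]
      exact hb z hg
  | succ a ih =>
    intro z hg
    by_cases hs : stopP n z
    · rw [PCf_stopped hs, PCf_stopped hs, mul_zero]
    · have e : a + 1 + m = (a + m) + 1 := by omega
      rw [e]
      have hPC : PCf lam mu1 mu2 n ((a + m) + 1) z
          = ∑ v ∈ S, incProb lam mu1 mu2 v * PCf lam mu1 mu2 n (a + m) (step z v) :=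
        if_neg hs
      have hPC' : PCf lam mu1 mu2 n (a + 1) z
          = ∑ v ∈ S, incProb lam mu1 mu2 v * PCf lam mu1 mu2 n a (step z v) := if_neg hs
      rw [hPC, hPC', Finset.mul_sum]
      refine Finset.sum_le_sum fun v hv => ?_
      calc incProb lam mu1 mu2 v * PCf lam mu1 mu2 n (a + m) (step z v)
          ≤ incProb lam mu1 mu2 v * (cc * PCf lam mu1 mu2 n a (step z v)) :=
            mul_le_mul_of_nonneg_left (ih (step z v) (good_step hg hs hv))
              (pS_nonneg hlam h1 h2 v)
        _ = cc * (incProb lam mu1 mu2 v * PCf lam mu1 mu2 n a (step z v)) := by ring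

lemma PCf_geom {n : ℕ} (hn : 1 ≤ n) :
    ∀ (m : ℕ) (z : ℤ × ℤ), good n z →
      PCf lam mu1 mu2 n (m * n) z ≤ (1 - lam ^ n) ^ m := by
  have hl1 : lam < 1 := lam_lt_one hlam h1 h2 hsum
  have hcc : (0:ℝ) ≤ 1 - lam ^ n := by
    have : lam ^ n ≤ 1 := pow_le_one₀ (le_of_lt hlam) (le_of_lt hl1)
    linarith
  have hb : ∀ z, good n z → PCf lam mu1 mu2 n n z ≤ 1 - lam ^ n := by
    intro z hg
    obtain ⟨hz2, ha0, han⟩ := id hg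
    have h := PCf_basic hlam h1 h2 hsum n n z hg (by omega)
    have hd : (z.1 - z.2).toNat ≤ n := by omega
    have : lam ^ n ≤ lam ^ (z.1 - z.2).toNat :=
      pow_le_pow_of_le_one (le_of_lt hlam) (le_of_lt hl1) hd
    linarith
  intro m
  induction m with
  | zero =>
    intro z hg
    rw [Nat.zero_mul, pow_zero]
    exact PCf_le_one hlam h1 h2 hsum n 0 z
  | succ m ih =>
    intro z hg
    have e : (m + 1) * n = m * n + n := by ring
    rw [e, pow_succ]
    calc PCf lam mu1 mu2 n (m * n + n) z
        ≤ (1 - lam ^ n) * PCf lam mu1 mu2 n (m * n) z :=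
          PCf_chain hlam h1 h2 hsum hcc hb (m * n) z hg
      _ ≤ (1 - lam ^ n) * (1 - lam ^ n) ^ m :=
          mul_le_mul_of_nonneg_left (ih z hg) hcc
      _ = (1 - lam ^ n) ^ m * (1 - lam ^ n) := by ring

open Filter in
lemma PCf_tendsto {n : ℕ} (hn : 1 ≤ n) {z : ℤ × ℤ} (hg : good n z) :
    Tendsto (fun k => PCf lam mu1 mu2 n k z) atTop (nhds 0) := by
  have hl1 : lam < 1 := lam_lt_one hlam h1 h2 hsum
  have hpn : 0 < lam ^ n := pow_pos hlam n
  have hcc0 : (0:ℝ) ≤ 1 - lam ^ n := by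
    have : lam ^ n ≤ 1 := pow_le_one₀ (le_of_lt hlam) (le_of_lt hl1)
    linarith
  have hcc1 : 1 - lam ^ n < 1 := by linarith
  have hub : ∀ k, PCf lam mu1 mu2 n k z ≤ (1 - lam ^ n) ^ (k / n) := by
    intro k
    calc PCf lam mu1 mu2 n k z
        ≤ PCf lam mu1 mu2 n ((k / n) * n) z :=
          PCf_anti hlam h1 h2 hsum n (Nat.div_mul_le_self k n) z
      _ ≤ (1 - lam ^ n) ^ (k / n) := PCf_geom hlam h1 h2 hsum hn (k / n) z hg
  have htd : Tendsto (fun k : ℕ => (1 - lam ^ n) ^ (k / n)) atTop (nhds 0) := by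
    have h1' : Tendsto (fun m : ℕ => (1 - lam ^ n) ^ m) atTop (nhds 0) :=
      tendsto_pow_atTop_nhds_zero_of_lt_one hcc0 hcc1
    have h2' : Tendsto (fun k : ℕ => k / n) atTop atTop :=
      (map_div_atTop_eq_nat n (by omega)).le
    exact h1'.comp h2'
  refine tendsto_of_tendsto_of_tendsto_of_le_of_le tendsto_const_nhds htd
    (fun k => PCf_nonneg hlam h1 h2 n k z) hub

end Probs2

/-! ### Stage 5: words and sum representation -/

lemma mem_S_iff {v : ℤ × ℤ} : v ∈ S ↔ v = (-1, 0) ∨ v = (1, 1) ∨ v = (0, -1) := by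
  simp [S]

noncomputable instance : DecidableEq (ℕ → ℤ × ℤ) := Classical.decEq _

/-- canonical words of length k (junk value (-1,0) beyond k) -/
noncomputable def Words : ℕ → Finset (ℕ → ℤ × ℤ)
  | 0 => {fun _ => (-1, 0)}
  | k + 1 => S.biUnion fun v => (Words k).image (wcons v)

lemma sum_Words_succ (k : ℕ) (F : (ℕ → ℤ × ℤ) → ℝ) :
    ∑ w ∈ Words (k + 1), F w = ∑ v ∈ S, ∑ w ∈ Words k, F (wcons v w) := by
  show ∑ w ∈ S.biUnion (fun v => (Words k).image (wcons v)), F w = _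
  rw [Finset.sum_biUnion]
  · refine Finset.sum_congr rfl fun v _ => ?_
    rw [Finset.sum_image]
    intro w _ w' _ h
    have := congrArg shift h
    simpa using this
  · intro v _ v' _ hvv'
    refine Finset.disjoint_left.mpr fun u hu hu' => ?_
    rw [Finset.mem_image] at hu hu'
    obtain ⟨w, _, rfl⟩ := hu
    obtain ⟨w', _, h⟩ := hu'
    exact hvv' (by have := congrFun h 0; simpa using this.symm)

lemma prod_wcons (f : ℤ × ℤ → ℝ) (v : ℤ × ℤ) (w : ℕ → ℤ × ℤ) (k : ℕ) :
    ∏ j ∈ Finset.range (k + 1), f (wcons v w j)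
      = f v * ∏ j ∈ Finset.range k, f (w j) := by
  rw [Finset.prod_range_succ']
  simp [mul_comm]

lemma mem_Words_of {k : ℕ} {w : ℕ → ℤ × ℤ} (h1 : ∀ j < k, w j ∈ S)
    (h2 : ∀ j, k ≤ j → w j = (-1, 0)) : w ∈ Words k := by
  induction k generalizing w with
  | zero =>
    have : w = fun _ => (-1, 0) := funext fun j => h2 j (Nat.zero_le j)
    rw [this]
    exact Finset.mem_singleton_self _
  | succ k ih =>
    have hw : w = wcons (w 0) (shift w) := by
      funext j
      cases j with
      | zero => rfl
      | succ j => rfl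
    rw [hw]
    refine Finset.mem_biUnion.mpr ⟨w 0, h1 0 (Nat.succ_pos k), Finset.mem_image.mpr
      ⟨shift w, ih (fun j hj => h1 (j+1) (by omega)) (fun j hj => h2 (j+1) (by omega)), rfl⟩⟩

variable {lam mu1 mu2 : ℝ}

lemma sum_prod_Words (hsum : lam + mu1 + mu2 = 1) :
    ∀ k, ∑ w ∈ Words k, ∏ j ∈ Finset.range k, incProb lam mu1 mu2 (w j) = 1 := by
  intro k
  induction k with
  | zero => simp [Words]
  | succ k ih =>
    rw [sum_Words_succ]
    calc ∑ v ∈ S, ∑ w ∈ Words k, ∏ j ∈ Finset.range (k+1), incProb lam mu1 mu2 (wcons v w j)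
        = ∑ v ∈ S, ∑ w ∈ Words k,
            incProb lam mu1 mu2 v * ∏ j ∈ Finset.range k, incProb lam mu1 mu2 (w j) := by
          refine Finset.sum_congr rfl fun v _ => Finset.sum_congr rfl fun w _ => ?_
          exact prod_wcons _ v w k
      _ = ∑ v ∈ S, incProb lam mu1 mu2 v * 1 := by
          refine Finset.sum_congr rfl fun v _ => ?_
          rw [← Finset.mul_sum, ih]
      _ = 1 := by simp only [mul_one]; exact sum_p_S hsum

/-- sum representation of PAf -/
lemma PAf_rep (hsum : lam + mu1 + mu2 = 1) (n : ℕ) :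
    ∀ (k : ℕ) (z : ℤ × ℤ),
    PAf lam mu1 mu2 n k z
      = ∑ w ∈ Words k, (∏ j ∈ Finset.range k, incProb lam mu1 mu2 (w j))
          * (if (spath n z w k).1 = (spath n z w k).2 then (1:ℝ) else 0) := by
  intro k
  induction k with
  | zero =>
    intro z
    simp [Words, PAf, spath]
    exact if_congr Iff.rfl rfl rfl
  | succ k ih =>
    intro z
    by_cases hs : stopP n z
    · rw [PAf_stopped hs]
      have : ∀ w ∈ Words (k+1), (∏ j ∈ Finset.range (k+1), incProb lam mu1 mu2 (w j))
          * (if (spath n z w (k+1)).1 = (spath n z w (k+1)).2 then (1:ℝ) else 0)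
          = (∏ j ∈ Finset.range (k+1), incProb lam mu1 mu2 (w j))
            * (if z.1 = z.2 then (1:ℝ) else 0) := by
        intro w _
        rw [spath_frozen hs]
      rw [Finset.sum_congr rfl this, ← Finset.sum_mul, sum_prod_Words hsum, one_mul]
    · have hPA : PAf lam mu1 mu2 n (k+1) z
          = ∑ v ∈ S, incProb lam mu1 mu2 v * PAf lam mu1 mu2 n k (step z v) := if_neg hs
      rw [hPA, sum_Words_succ]
      refine Finset.sum_congr rfl fun v hv => ?_
      rw [ih (step z v), Finset.mul_sum]
      refine Finset.sum_congr rfl fun w hw => ?_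
      have hsp : spath n z (wcons v w) (k+1) = spath n (step z v) w k := by
        show (if stopP n z then z else spath n (step z (wcons v w 0)) (shift (wcons v w)) k) = _
        rw [if_neg hs, wcons_zero, shift_wcons]
      rw [hsp, prod_wcons]
      ring

/-! ### Stage 5b: path combinatorics -/

/-- the difference moves by at most one per step -/
lemma step_diff {z v : ℤ × ℤ} (hv : v ∈ S) :
    (step z v).1 - (step z v).2 ≤ z.1 - z.2 + 1 ∧
      z.1 - z.2 - 1 ≤ (step z v).1 - (step z v).2 := by
  rcases mem_S_iff.mp hv with rfl | rfl | rfl <;>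
    · unfold step
      split_ifs <;> simp <;> omega

/-- integer IVT for sequences with upward steps ≤ 1 -/
lemma ivt (f : ℕ → ℤ) (c : ℤ) (hstep : ∀ i, f (i + 1) ≤ f i + 1) :
    ∀ m, f 0 ≤ c → c < f m → ∃ i < m, f i = c := by
  intro m
  induction m with
  | zero => intro h0 hm; omega
  | succ m ih =>
    intro h0 hm
    by_cases h : c < f m
    · obtain ⟨i, hi, hfi⟩ := ih h0 h
      exact ⟨i, by omega, hfi⟩
    · exact ⟨m, by omega, by have := hstep m; omega⟩

lemma path_diff_le {z : ℤ × ℤ} {w : ℕ → ℤ × ℤ} (hw : ∀ j, w j ∈ S) :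
    ∀ k, (path z w k).1 - (path z w k).2 ≤ z.1 - z.2 + k := by
  intro k
  induction k with
  | zero => simp [path]
  | succ k ih =>
    have := (step_diff (z := path z w k) (hw k)).1
    show (step (path z w k) (w k)).1 - (step (path z w k) (w k)).2 ≤ _
    push_cast
    omega

/-- monotonicity of the stopped-at-diagonal event in n -/
lemma spath_diag_mono {n : ℕ} {z : ℤ × ℤ} {w : ℕ → ℤ × ℤ} (hw : ∀ j, w j ∈ S)
    (hd0 : z.1 - z.2 ≤ (n : ℤ)) {k : ℕ}
    (h : (spath n z w k).1 = (spath n z w k).2) :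
    (spath (n + 1) z w k).1 = (spath (n + 1) z w k).2 := by
  rw [spath_diag_iff] at h ⊢
  obtain ⟨j, hj, hdiag, hpre⟩ := h
  refine ⟨j, hj, hdiag, fun i hi => ?_⟩
  rintro (hdi | hli)
  · exact (hpre i hi) (Or.inl hdi)
  · -- the path reached level n+1 at time i; by IVT it reached n earlier
    have hstep' : ∀ i', (path z w (i'+1)).1 - (path z w (i'+1)).2
        ≤ (path z w i').1 - (path z w i').2 + 1 := by
      intro i'
      exact (step_diff (z := path z w i') (hw i')).1
    have h0 : (path z w 0).1 - (path z w 0).2 ≤ (n : ℤ) := hd0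
    have hlt : (n : ℤ) < (path z w i).1 - (path z w i).2 := by
      rw [hli]; push_cast; omega
    obtain ⟨i', hi', hfi⟩ := ivt (fun i => (path z w i).1 - (path z w i).2) n hstep' i h0 hlt
    exact (hpre i' (by omega)) (Or.inr hfi)

lemma spath_diag_mono_le {z : ℤ × ℤ} {w : ℕ → ℤ × ℤ} (hw : ∀ j, w j ∈ S)
    {n n' : ℕ} (hn : n ≤ n') (hd0 : z.1 - z.2 ≤ (n : ℤ)) {k : ℕ}
    (h : (spath n z w k).1 = (spath n z w k).2) :
    (spath n' z w k).1 = (spath n' z w k).2 := by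
  induction n' with
  | zero => rw [Nat.le_zero.mp hn] at h; exact h
  | succ n' ih =>
    rcases Nat.lt_or_ge n (n' + 1) with hlt | hge
    · have := ih (by omega)
      exact spath_diag_mono hw (le_trans hd0 (by exact_mod_cast Nat.le_of_lt_succ hlt)) this
    · rw [Nat.le_antisymm hn hge] at h; exact h

/-- monotonicity in k -/
lemma spath_diag_mono_k {n : ℕ} {z : ℤ × ℤ} {w : ℕ → ℤ × ℤ} {k k' : ℕ} (hk : k ≤ k')
    (h : (spath n z w k).1 = (spath n z w k).2) :
    (spath n z w k').1 = (spath n z w k').2 := by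
  induction k' with
  | zero => rw [Nat.le_zero.mp hk] at h; exact h
  | succ k' ih =>
    rcases Nat.lt_or_ge k (k' + 1) with hlt | hge
    · have h' := ih (by omega)
      rw [spath_stay k' z w (Or.inl h')]
      exact h'
    · rw [Nat.le_antisymm hk hge] at h; exact h

/-- the full hitting event is the union of the stopped events -/
lemma hit_iff_spath {z : ℤ × ℤ} {w : ℕ → ℤ × ℤ} (hw : ∀ j, w j ∈ S) :
    (∃ k, (path z w k).1 = (path z w k).2) ↔
    (∃ m k, (spath ((z.1 - z.2).toNat + 1 + m) z w k).1
      = (spath ((z.1 - z.2).toNat + 1 + m) z w k).2) := by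
  constructor
  · rintro ⟨k, hk⟩
    have hex : ∃ k, (path z w k).1 = (path z w k).2 := ⟨k, hk⟩
    classical
    set j := Nat.find hex with hj
    have hdiag : (path z w j).1 = (path z w j).2 := Nat.find_spec hex
    have hmin : ∀ i < j, ¬ (path z w i).1 = (path z w i).2 := fun i hi => Nat.find_min hex hi
    refine ⟨j, j, ?_⟩
    rw [spath_diag_iff]
    refine ⟨j, le_refl j, hdiag, fun i hi => ?_⟩
    rintro (hdi | hli)
    · exact hmin i hi hdi
    · have hle := path_diff_le hw (z := z) i
      have : (path z w i).1 - (path z w i).2 ≤ z.1 - z.2 + i := hle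
      rw [hli] at this
      push_cast at this
      omega
  · rintro ⟨m, k, h⟩
    rw [spath_diag_iff] at h
    obtain ⟨j, _, hdiag, _⟩ := h
    exact ⟨j, hdiag⟩


/-! ### Stage 6: measure bridge -/

lemma PAf_nonneg (hlam : 0 < lam) (h1 : lam < mu1) (h2 : lam < mu2) (n : ℕ) :
    ∀ (k : ℕ) (z : ℤ × ℤ), 0 ≤ PAf lam mu1 mu2 n k z := by
  intro k
  induction k with
  | zero => intro z; show (0:ℝ) ≤ if z.1 = z.2 then 1 else 0; split <;> norm_num
  | succ k ih =>
    intro z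
    show (0:ℝ) ≤ if stopP n z then _ else _
    split
    · split <;> norm_num
    · exact Finset.sum_nonneg fun v _ => mul_nonneg (pS_nonneg hlam h1 h2 v) (ih _)

lemma Words_spec : ∀ (k : ℕ) (w : ℕ → ℤ × ℤ), w ∈ Words k →
    (∀ j < k, w j ∈ S) ∧ (∀ j, k ≤ j → w j = (-1, 0)) := by
  intro k
  induction k with
  | zero =>
    intro w hw
    have : w = fun _ => (-1, 0) := Finset.mem_singleton.mp hw
    subst this
    exact ⟨fun j hj => absurd hj (Nat.not_lt_zero j), fun j _ => rfl⟩
  | succ k ih =>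
    intro w hw
    obtain ⟨v, hv, hw'⟩ := Finset.mem_biUnion.mp hw
    obtain ⟨w', hw'', rfl⟩ := Finset.mem_image.mp hw'
    obtain ⟨hA, hB⟩ := ih w' hw''
    constructor
    · intro j hj
      cases j with
      | zero => exact hv
      | succ j => exact hA j (by omega)
    · intro j hj
      cases j with
      | zero => omega
      | succ j => exact hB j (by omega)

section Measure

open Filter

variable {Ω : Type*} [MeasurableSpace Ω] (P : Measure Ω) [IsProbabilityMeasure P]
variable (I : ℕ → Ω → ℤ × ℤ)

lemma measure_E
    (hmeas : ∀ k, Measurable (I k))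
    (hvals : ∀ k ω, I k ω ∈ ({(-1, 0), (1, 1), (0, -1)} : Set (ℤ × ℤ)))
    (hiid : ∀ (k : ℕ) (w : ℕ → ℤ × ℤ),
      P {ω | ∀ j < k, I j ω = w j}
        = ENNReal.ofReal (∏ j ∈ Finset.range k, incProb lam mu1 mu2 (w j)))
    (hlam : 0 < lam) (h1 : lam < mu1) (h2 : lam < mu2) (hsum : lam + mu1 + mu2 = 1)
    (y : ℤ × ℤ) (n k : ℕ) :
    P {ω | (spath n y (fun j => I j ω) k).1 = (spath n y (fun j => I j ω) k).2}
      = ENNReal.ofReal (PAf lam mu1 mu2 n k y) := by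
  classical
  set W := (Words k).filter
    (fun w => (spath n y w k).1 = (spath n y w k).2) with hW
  have hvS : ∀ j ω, I j ω ∈ S := by
    intro j ω
    rw [mem_S_iff]
    simpa using hvals j ω
  have hE : {ω | (spath n y (fun j => I j ω) k).1 = (spath n y (fun j => I j ω) k).2}
      = ⋃ w ∈ W, {ω | ∀ j < k, I j ω = w j} := by
    ext ω
    simp only [Set.mem_setOf_eq, Set.mem_iUnion]
    constructor
    · intro hQ
      refine ⟨fun j => if j < k then I j ω else (-1, 0), ?_, fun j hj => by simp [hj]⟩
      rw [hW, Finset.mem_filter]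
      have hcg : spath n y (fun j => if j < k then I j ω else (-1, 0)) k
          = spath n y (fun j => I j ω) k :=
        spath_congr k y _ _ (fun j hj => by simp [hj])
      exact ⟨mem_Words_of (fun j hj => by simpa [hj] using hvS j ω)
        (fun j hj => if_neg (by omega)), by rw [hcg]; exact hQ⟩
    · rintro ⟨w, hwW, hcyl⟩
      rw [hW, Finset.mem_filter] at hwW
      have hcg : spath n y (fun j => I j ω) k = spath n y w k :=
        spath_congr k y _ _ (fun j hj => hcyl j hj)
      rw [hcg]
      exact hwW.2
  have hCylMeas : ∀ w : ℕ → ℤ × ℤ, MeasurableSet {ω | ∀ j < k, I j ω = w j} := by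
    intro w
    have : {ω | ∀ j < k, I j ω = w j} = ⋂ (j : ℕ) (_ : j < k), (I j) ⁻¹' {w j} := by
      ext ω; simp [Set.mem_iInter]
    rw [this]
    exact MeasurableSet.iInter fun j => MeasurableSet.iInter fun _ =>
      (hmeas j) (measurableSet_singleton _)
  have hdisj : (W : Set (ℕ → ℤ × ℤ)).PairwiseDisjoint
      (fun w => {ω | ∀ j < k, I j ω = w j}) := by
    intro w hw w' hw' hne'
    refine Set.disjoint_left.mpr fun ω hω hω' => ?_
    apply hne'
    have hs1 := Words_spec k w (Finset.mem_filter.mp hw).1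
    have hs2 := Words_spec k w' (Finset.mem_filter.mp hw').1
    funext j
    rcases Nat.lt_or_ge j k with hj | hj
    · rw [← hω j hj, ← hω' j hj]
    · rw [hs1.2 j hj, hs2.2 j hj]
  rw [hE, measure_biUnion_finset hdisj (fun w _ => hCylMeas w)]
  have hprodnn : ∀ w : ℕ → ℤ × ℤ, 0 ≤ ∏ j ∈ Finset.range k, incProb lam mu1 mu2 (w j) :=
    fun w => Finset.prod_nonneg fun j _ => pS_nonneg hlam h1 h2 (w j)
  calc ∑ w ∈ W, P {ω | ∀ j < k, I j ω = w j}
      = ∑ w ∈ W, ENNReal.ofReal (∏ j ∈ Finset.range k, incProb lam mu1 mu2 (w j)) :=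
        Finset.sum_congr rfl fun w _ => hiid k w
    _ = ENNReal.ofReal (∑ w ∈ W, ∏ j ∈ Finset.range k, incProb lam mu1 mu2 (w j)) :=
        (ENNReal.ofReal_sum_of_nonneg fun w _ => hprodnn w).symm
    _ = ENNReal.ofReal (PAf lam mu1 mu2 n k y) := by
        congr 1
        rw [hW, Finset.sum_filter, PAf_rep hsum n k y]
        refine Finset.sum_congr rfl fun w _ => ?_
        split <;> simp

end Measure

end HPF

open HPF Filter Topology

/-- the exact formula for the hitting probability of the diagonal:
P_y(τ < ∞) = ρ₂^(y(1)-y(2)) + ((μ₂-λ)/(μ₂-μ₁))ρ₁^(y(1)-y(2))ρ₁^(y(2))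
  + ((μ₂-λ)/(μ₁-μ₂))ρ₂^(y(1)-y(2))ρ₁^(y(2)), ρᵢ = λ/μᵢ, for y ∈ ℤ×ℤ₊, y(1) ≥ y(2). -/
theorem hitting_probability_formula
    {Ω : Type*} [MeasurableSpace Ω] (P : Measure Ω) [IsProbabilityMeasure P]
    (lam mu1 mu2 : ℝ) (hlam : 0 < lam) (h1 : lam < mu1) (h2 : lam < mu2)
    (hne : mu1 ≠ mu2) (hsum : lam + mu1 + mu2 = 1)
    (I : ℕ → Ω → ℤ × ℤ) (hmeas : ∀ k, Measurable (I k))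
    (hvals : ∀ k ω, I k ω ∈ ({(-1, 0), (1, 1), (0, -1)} : Set (ℤ × ℤ)))
    (hiid : ∀ (k : ℕ) (w : ℕ → ℤ × ℤ),
      P {ω | ∀ j < k, I j ω = w j}
        = ENNReal.ofReal (∏ j ∈ Finset.range k, incProb lam mu1 mu2 (w j)))
    (y : ℤ × ℤ) (hy2 : 0 ≤ y.2) (hy12 : y.2 ≤ y.1)
    (Y : ℕ → Ω → ℤ × ℤ) (hY0 : ∀ ω, Y 0 ω = y)
    (hYstep : ∀ k ω, Y (k + 1) ω
        = Y k ω + (if 0 ≤ (Y k ω + I k ω).2 then I k ω else 0)) :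
    P {ω | ∃ k, (Y k ω).1 = (Y k ω).2}
      = ENNReal.ofReal
          ((lam / mu2) ^ (y.1 - y.2)
            + ((mu2 - lam) / (mu2 - mu1)) * (lam / mu1) ^ (y.1 - y.2) * (lam / mu1) ^ y.2
            + ((mu2 - lam) / (mu1 - mu2)) * (lam / mu2) ^ (y.1 - y.2)
                * (lam / mu1) ^ y.2) := by
  classical
  -- basic positivity
  have hm1 : (0:ℝ) < mu1 := lt_trans hlam h1
  have hm2 : (0:ℝ) < mu2 := lt_trans hlam h2
  set c : ℝ := (mu2 - lam) / (mu2 - mu1) with hcdef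
  have hc : c * (mu2 - mu1) = mu2 - lam :=
    div_mul_cancel₀ _ (sub_ne_zero.mpr (Ne.symm hne))
  set g : ℝ := gfun lam mu1 mu2 c (y.1 - y.2) y.2 with hgdef
  -- the target real expression is g
  have hgexpr : (lam / mu2) ^ (y.1 - y.2)
      + ((mu2 - lam) / (mu2 - mu1)) * (lam / mu1) ^ (y.1 - y.2) * (lam / mu1) ^ y.2
      + ((mu2 - lam) / (mu1 - mu2)) * (lam / mu2) ^ (y.1 - y.2) * (lam / mu1) ^ y.2
      = g := by
    rw [hgdef]
    unfold gfun
    have hminus : (mu2 - lam) / (mu1 - mu2) = -c := by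
      rw [hcdef, show mu1 - mu2 = -(mu2 - mu1) by ring, div_neg]
    rw [hminus]
    ring
  -- Y is the path
  have hYpath : ∀ k ω, Y k ω = path y (fun j => I j ω) k := by
    intro k
    induction k with
    | zero => intro ω; exact hY0 ω
    | succ k ih =>
      intro ω
      rw [hYstep k ω, ih ω]
      rfl
  have hvS : ∀ (ω : Ω) (j : ℕ), I j ω ∈ S := by
    intro ω j
    rw [mem_S_iff]
    simpa using hvals j ω
  set d0 : ℕ := (y.1 - y.2).toNat with hd0def
  have hd0 : (d0 : ℤ) = y.1 - y.2 := Int.toNat_of_nonneg (by omega)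
  -- events
  set EE : ℕ → ℕ → Set Ω := fun n k =>
    {ω | (spath n y (fun j => I j ω) k).1 = (spath n y (fun j => I j ω) k).2} with hEEdef
  set A : ℕ → Set Ω := fun m => ⋃ k, EE (d0 + 1 + m) k with hAdef
  -- the hitting event equals the union of the A's
  have hT : {ω | ∃ k, (Y k ω).1 = (Y k ω).2} = ⋃ m, A m := by
    ext ω
    simp only [Set.mem_setOf_eq, Set.mem_iUnion, hAdef, hEEdef]
    constructor
    · intro ⟨k, hk⟩
      rw [hYpath k ω] at hk
      have := (hit_iff_spath (z := y) (w := fun j => I j ω) (hvS ω)).mp ⟨k, hk⟩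
      obtain ⟨m, k', h⟩ := this
      exact ⟨m, k', h⟩
    · rintro ⟨m, k, h⟩
      have := (hit_iff_spath (z := y) (w := fun j => I j ω) (hvS ω)).mpr ⟨m, k, h⟩
      obtain ⟨k', hk'⟩ := this
      exact ⟨k', by rw [hYpath k' ω]; exact hk'⟩
  -- measure of each EE
  have hPE : ∀ n k, P (EE n k) = ENNReal.ofReal (PAf lam mu1 mu2 n k y) :=
    fun n k => measure_E P I hmeas hvals hiid hlam h1 h2 hsum y n k
  -- EE is monotone in k
  have hEEmonok : ∀ n, Monotone (EE n) := by
    intro n k k' hkk'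
    intro ω hω
    exact spath_diag_mono_k hkk' hω
  -- A is monotone
  have hAmono : Monotone A := by
    intro m m' hmm'
    refine Set.iUnion_mono fun k => ?_
    intro ω hω
    refine spath_diag_mono_le (hvS ω) (by omega) (by rw [← hd0]; push_cast; omega) hω
  -- bounds
  set r : ℝ := max (lam / mu1) (lam / mu2) with hrdef
  have hr0 : 0 < r := lt_max_of_lt_left (div_pos hlam hm1)
  have hr1 : r < 1 := max_lt ((div_lt_one hm1).mpr h1) ((div_lt_one hm2).mpr h2)
  set BB : ℝ := 1 + 2 * |c| with hBBdef
  have hBB0 : 0 ≤ BB := by positivity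
  -- good n y for suitable n
  have hgood : ∀ m : ℕ, good (d0 + 1 + m) y := by
    intro m
    refine ⟨hy2, by omega, ?_⟩
    rw [← hd0]
    push_cast
    omega
  -- per-n estimate after k → ∞
  have hestn : ∀ m : ℕ, |g - (P (A m)).toReal| ≤ BB * r ^ (d0 + 1 + m) := by
    intro m
    set n := d0 + 1 + m with hndef
    have hPAlim : Tendsto (fun k => P (EE n k)) atTop (𝓝 (P (A m))) := by
      rw [hAdef]
      exact tendsto_measure_iUnion_atTop (hEEmonok n)
    have hPne : P (A m) ≠ ⊤ := (measure_lt_top P _).ne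
    have hPAlim' : Tendsto (fun k => PAf lam mu1 mu2 n k y) atTop (𝓝 ((P (A m)).toReal)) := by
      have := (ENNReal.tendsto_toReal hPne).comp hPAlim
      refine this.congr fun k => ?_
      show (P (EE n k)).toReal = _
      rw [hPE n k, ENNReal.toReal_ofReal (PAf_nonneg hlam h1 h2 n k y)]
    have hlhs : Tendsto (fun k => |g - PAf lam mu1 mu2 n k y|) atTop
        (𝓝 (|g - (P (A m)).toReal|)) :=
      ((tendsto_const_nhds.sub hPAlim').abs)
    have hrhs : Tendsto (fun k => BB * r ^ n + BB * PCf lam mu1 mu2 n k y) atTop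
        (𝓝 (BB * r ^ n)) := by
      have h0 : Tendsto (fun k => BB * PCf lam mu1 mu2 n k y) atTop (𝓝 (BB * 0)) :=
        (PCf_tendsto hlam h1 h2 hsum (by omega) (hgood m)).const_mul BB
      rw [mul_zero] at h0
      simpa using (tendsto_const_nhds.add h0)
    refine le_of_tendsto_of_tendsto' hlhs hrhs fun k => ?_
    exact main_estimate hlam h1 h2 hsum hc n k y (hgood m)
  -- limit in m
  have hTlim : Tendsto (fun m => P (A m)) atTop (𝓝 (P (⋃ m, A m))) :=
    tendsto_measure_iUnion_atTop hAmono
  have hTne : P (⋃ m, A m) ≠ ⊤ := (measure_lt_top P _).ne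
  have hTlim' : Tendsto (fun m => (P (A m)).toReal) atTop (𝓝 ((P (⋃ m, A m)).toReal)) :=
    (ENNReal.tendsto_toReal hTne).comp hTlim
  have habs : Tendsto (fun m => |g - (P (A m)).toReal|) atTop
      (𝓝 (|g - (P (⋃ m, A m)).toReal|)) :=
    (tendsto_const_nhds.sub hTlim').abs
  have hge : |g - (P (⋃ m, A m)).toReal| ≤ 0 := by
    have hub : ∀ m : ℕ, |g - (P (A m)).toReal| ≤ BB * r ^ m := by
      intro m
      refine le_trans (hestn m) ?_
      have : r ^ (d0 + 1 + m) ≤ r ^ m :=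
        pow_le_pow_of_le_one (le_of_lt hr0) (le_of_lt hr1) (by omega)
      exact mul_le_mul_of_nonneg_left this hBB0
    have hrt : Tendsto (fun m : ℕ => BB * r ^ m) atTop (𝓝 (BB * 0)) :=
      (tendsto_pow_atTop_nhds_zero_of_lt_one (le_of_lt hr0) hr1).const_mul BB
    rw [mul_zero] at hrt
    exact le_of_tendsto_of_tendsto' habs hrt hub
  have heq : g = (P (⋃ m, A m)).toReal := by
    have := abs_nonneg (g - (P (⋃ m, A m)).toReal)
    have h0 : |g - (P (⋃ m, A m)).toReal| = 0 := le_antisymm hge this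
    have := abs_eq_zero.mp h0
    linarith [sub_eq_zero.mp this]
  rw [hT, hgexpr, heq, ENNReal.ofReal_toReal hTne]
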